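/- arXiv:1405.0144 — 3 statements merged into one kernel-verified Lean document; each statement's English description precedes it below -/
import Mathlib

section
/- For every real $\mu > 0$ and every $k \in \mathbb{N}$, the Taylor coefficients of $h_\mu$ alternate in sign: $(-1)^k f_k(\mu) > 0$. In particular $f_k(\mu)$ is positive for even $k$ and negative for odd $k$. -/
open Complex Finset

/-- The function `h_μ(w) = exp(μ · Log((1-w)/(1+w)))`, defined via the principal
branch of the complex logarithm. -/
noncomputable def h (μ : ℝ) (w : ℂ) : ℂ :=
  Complex.exp ((μ : ℂ) * Complex.log ((1 - w) / (1 + w)))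

/-- `f k μ` is the `k`-th Taylor coefficient of `h μ` at `w = 0`,
i.e. `h_μ^{(k)}(0)/k!`. -/
noncomputable def f (μ : ℝ) (k : ℕ) : ℂ :=
  iteratedDeriv k (h μ) 0 / (Nat.factorial k : ℂ)


lemma one_add_ne (w : ℂ) (hw : ‖w‖ < 1) : 1 + w ≠ 0 := by
  intro hc
  have : ‖w‖ = 1 := by
    have : w = -1 := by linear_combination hc
    simp [this]
  linarith

lemma one_sub_ne (w : ℂ) (hw : ‖w‖ < 1) : 1 - w ≠ 0 := by
  intro hc
  have : w = 1 := by linear_combination -hc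
  simp [this] at hw

lemma one_sub_sq_ne (w : ℂ) (hw : ‖w‖ < 1) : 1 - w ^ 2 ≠ 0 := by
  have h1 := one_add_ne w hw
  have h2 := one_sub_ne w hw
  intro hc
  have : (1 - w) * (1 + w) = 0 := by ring_nf; linear_combination hc
  rcases mul_eq_zero.mp this with h | h
  exacts [h2 h, h1 h]

lemma re_pos (w : ℂ) (hw : ‖w‖ < 1) : 0 < ((1 - w) / (1 + w)).re := by
  rw [Complex.div_re]
  have hne := one_add_ne w hw
  have hsq : 0 < Complex.normSq (1 + w) := Complex.normSq_pos.mpr hne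
  have hn : Complex.normSq w < 1 := by
    have := Complex.normSq_eq_norm_sq w
    have h1 : ‖w‖ < 1 := hw
    nlinarith [Complex.normSq_nonneg w, norm_nonneg w]
  have : (1 - w).re * (1 + w).re + (1 - w).im * (1 + w).im = 1 - Complex.normSq w := by
    simp [Complex.normSq_apply, Complex.sub_re, Complex.add_re, Complex.sub_im, Complex.add_im]
    ring
  rw [← add_div, this]
  exact div_pos (by linarith) hsq

lemma mem_slit (w : ℂ) (hw : ‖w‖ < 1) : (1 - w) / (1 + w) ∈ Complex.slitPlane := by
  exact Complex.mem_slitPlane_iff.mpr (Or.inl (re_pos w hw))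


lemma hasDerivAt_h (μ : ℝ) {w : ℂ} (hw : ‖w‖ < 1) :
    HasDerivAt (h μ) ((-2 * μ) / (1 - w ^ 2) * h μ w) w := by
  have h1 := one_add_ne w hw
  have h2 := one_sub_ne w hw
  have h3 := one_sub_sq_ne w hw
  have hq : HasDerivAt (fun z : ℂ => (1 - z) / (1 + z))
      (((-1) * (1 + w) - (1 - w) * 1) / (1 + w) ^ 2) w :=
    (((hasDerivAt_id w).const_sub 1).div ((hasDerivAt_id w).const_add 1) h1)
  have hlog := (Complex.hasDerivAt_log (mem_slit w hw)).comp w hq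
  have hexp := (hlog.const_mul (μ : ℂ)).cexp
  convert hexp using 1
  · rfl
  · rfl
  simp only [Function.comp_def, h]
  rw [show Complex.exp ((μ:ℂ) * Complex.log ((1-w)/(1+w))) = h μ w from rfl]
  field_simp
  ring

lemma diffOn_h (μ : ℝ) : DifferentiableOn ℂ (h μ) (Metric.ball 0 1) := fun w hw =>
  ((hasDerivAt_h μ (by simpa using hw)).differentiableAt).differentiableWithinAt

lemma deriv_h (μ : ℝ) {w : ℂ} (hw : ‖w‖ < 1) :
    deriv (h μ) w = (-2 * μ) / (1 - w ^ 2) * h μ w := (hasDerivAt_h μ hw).deriv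

lemma diffOn_deriv_h (μ : ℝ) : DifferentiableOn ℂ (deriv (h μ)) (Metric.ball 0 1) := by
  have he : ∀ w ∈ Metric.ball (0:ℂ) 1, deriv (h μ) w = (-2*(μ:ℂ))/(1-w^2) * h μ w := by
    intro w hw
    exact deriv_h μ (by simpa using hw)
  refine DifferentiableOn.congr ?_ he
  apply DifferentiableOn.mul ?_ (diffOn_h μ)
  exact DifferentiableOn.div (differentiableOn_const _)
    ((differentiableOn_const _).sub (differentiable_pow 2).differentiableOn)
    (fun w hw => one_sub_sq_ne w (by simpa using hw))

lemma h_zero (μ : ℝ) : h μ 0 = 1 := by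
  simp [h]

lemma f_zero (μ : ℝ) : f μ 0 = 1 := by
  simp [f, h_zero]

lemma hasSum_h (μ : ℝ) {w : ℂ} (hw : ‖w‖ < 1) :
    HasSum (fun k : ℕ => f μ k * w ^ k) (h μ w) := by
  have H := Complex.hasSum_taylorSeries_on_ball (diffOn_h μ) (z := w) (c := 0)
    (by simpa using hw)
  convert H using 2 with k
  · rfl
  simp only [f, smul_eq_mul, sub_zero]
  rw [div_eq_mul_inv]
  ring

lemma hasSum_deriv_h (μ : ℝ) {w : ℂ} (hw : ‖w‖ < 1) :
    HasSum (fun k : ℕ => ((k : ℂ) + 1) * f μ (k + 1) * w ^ k) (deriv (h μ) w) := by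
  have H := Complex.hasSum_taylorSeries_on_ball (diffOn_deriv_h μ) (z := w) (c := 0)
    (by simpa using hw)
  convert H using 2 with k
  · rfl
  rw [show iteratedDeriv k (deriv (h μ)) 0 = iteratedDeriv (k + 1) (h μ) 0 from by
    rw [← iteratedDeriv_succ']]
  simp only [f, smul_eq_mul, sub_zero]
  have hk : ((k + 1).factorial : ℂ) ≠ 0 := Nat.cast_ne_zero.mpr (Nat.factorial_ne_zero _)
  have hk' : ((k).factorial : ℂ) ≠ 0 := Nat.cast_ne_zero.mpr (Nat.factorial_ne_zero _)
  rw [Nat.factorial_succ] at hk ⊢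
  push_cast at hk ⊢
  field_simp

noncomputable def cseq (μ : ℝ) (k : ℕ) : ℂ :=
  ((k : ℂ) + 1) * f μ (k + 1) + 2 * μ * f μ k - ((k - 1 : ℕ) : ℂ) * f μ (k - 1)

lemma hasSum_cseq (μ : ℝ) {w : ℂ} (hw : ‖w‖ < 1) :
    HasSum (fun k : ℕ => cseq μ k * w ^ k) 0 := by
  have h3 := one_sub_sq_ne w hw
  have A := (hasSum_h μ hw).mul_left (2 * (μ : ℂ))
  have B := hasSum_deriv_h μ hw
  set D : ℕ → ℂ := fun k => ((k - 1 : ℕ) : ℂ) * f μ (k - 1) * w ^ k with hD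
  have B2 : HasSum (fun k => D (k + 2)) (w ^ 2 * deriv (h μ) w) := by
    have := B.mul_left (w ^ 2)
    convert this using 2 with k
    · rfl
    simp only [hD, Nat.add_sub_cancel]
    push_cast
    ring
  have B3 : HasSum D (w ^ 2 * deriv (h μ) w) := by
    have := (hasSum_nat_add_iff (f := D) 2).mp B2
    simpa [hD, Finset.sum_range_succ] using this
  have C := (B.add A).sub B3
  convert C using 2 with k
  · rfl
  · simp only [cseq, hD]; ring
  · have hd := deriv_h μ hw
    rw [hd]
    field_simp
    ring

lemma cseq_eq_zero (μ : ℝ) (k : ℕ) : cseq μ k = 0 := by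
  set p := FormalMultilinearSeries.ofScalars ℂ (cseq μ) with hp
  have hsum : Summable (fun n => ‖p n‖ * ((1/2 : NNReal) : ℝ) ^ n) := by
    have h1 : Summable (fun k : ℕ => cseq μ k * (1/2 : ℂ) ^ k) :=
      (hasSum_cseq μ (w := (1/2 : ℂ)) (by norm_num)).summable
    have h2 := summable_norm_iff.mpr h1
    convert h2 using 2 with n
    rw [FormalMultilinearSeries.ofScalars_norm, norm_mul, norm_pow]
    norm_num
  have hball : HasFPowerSeriesOnBall (fun _ : ℂ => 0) p 0 ((1/2 : NNReal) : ENNReal) := by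
    refine ⟨p.le_radius_of_summable_norm hsum, by norm_num, fun {y} hy => ?_⟩
    rw [Metric.emetric_ball_nnreal] at hy
    have hy' : ‖y‖ < 1 := by
      have := mem_ball_zero_iff.mp hy
      norm_num at this ⊢
      linarith
    have := hasSum_cseq μ hy'
    convert this using 2 with n
    · rfl
    rw [hp, FormalMultilinearSeries.ofScalars_apply_eq, smul_eq_mul]
  have hz : p = 0 := by
    have hat : HasFPowerSeriesAt (0 : ℂ → ℂ) p 0 := hball.hasFPowerSeriesAt
    exact hat.eq_zero
  have : p k = 0 := by rw [hz]; rfl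
  exact (FormalMultilinearSeries.ofScalars_eq_zero ℂ k).mp this

lemma f_one (μ : ℝ) : f μ 1 = -2 * μ := by
  have := cseq_eq_zero μ 0
  simp only [cseq] at this
  norm_num [f_zero] at this
  linear_combination this

lemma f_rec (μ : ℝ) (j : ℕ) :
    ((j : ℂ) + 2) * f μ (j + 2) = (j : ℂ) * f μ j - 2 * μ * f μ (j + 1) := by
  have := cseq_eq_zero μ (j + 1)
  simp only [cseq, Nat.add_sub_cancel] at this
  push_cast at this
  linear_combination this

/-- For `μ > 0` the Taylor coefficients of `h μ` alternate in sign: each `f_k(μ)` is a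
real number `r` with `(-1)^k f_k(μ) = (-1)^k r` coming from a positive real, i.e.
`f_k(μ) = (-1)^k r` with `r > 0`.  In particular `f_k(μ)` is positive for even `k`
and negative for odd `k`. -/
theorem f_alternating_sign (μ : ℝ) (hμ : 0 < μ) (k : ℕ) :
    ∃ r : ℝ, 0 < r ∧ f μ k = (-1) ^ k * (r : ℂ) := by
  induction k using Nat.twoStepInduction with
  | zero => exact ⟨1, one_pos, by simp [f_zero]⟩
  | one => exact ⟨2 * μ, by positivity, by rw [f_one]; push_cast; ring⟩
  | more n ih1 ih2 =>
    obtain ⟨r₁, hr₁, hf₁⟩ := ih1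
    obtain ⟨r₂, hr₂, hf₂⟩ := ih2
    refine ⟨((n : ℝ) * r₁ + 2 * μ * r₂) / (n + 2), by positivity, ?_⟩
    have key := f_rec μ n
    rw [hf₁, hf₂] at key
    have hn2 : ((n : ℂ) + 2) ≠ 0 := by
      have : ((n : ℂ) + 2) = ((n + 2 : ℕ) : ℂ) := by push_cast; ring
      rw [this]
      exact Nat.cast_ne_zero.mpr (by omega)
    have hgoal : f μ (n + 2) = ((n : ℂ) * ((-1) ^ n * r₁) - 2 * μ * ((-1) ^ (n + 1) * r₂)) / ((n : ℂ) + 2) := by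
      rw [eq_div_iff hn2]
      linear_combination key
    rw [hgoal]
    push_cast
    have hr2 : ((n : ℝ) + 2 : ℂ) ≠ 0 := by push_cast at hn2 ⊢; exact hn2
    field_simp
    ring
end

section
/- For every real $\lambda > 0$ and every $k \in \mathbb{N}$, the $k$-th Taylor coefficient at $w = 0$ of the function $w \mapsto \frac{1+w}{1-w}\, h_{1-\lambda}(w)$ (which is analytic on the open unit disk) is strictly positive; that is, the discrete-time integrator term of the LDPID controller forms a positive-weighted sum of the samples of its input when $\lambda > 0$. -/
open Complex Finset

lemma LD_normSq_lt (w : ℂ) (hw : w ∈ Metric.ball (0:ℂ) 1) : Complex.normSq w < 1 := by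
  have h := mem_ball_zero_iff.mp hw
  calc Complex.normSq w = ‖w‖ ^ 2 := (Complex.sq_norm w).symm
  _ < 1 := by nlinarith [norm_nonneg w]
lemma LD_one_add_ne (w : ℂ) (hw : w ∈ Metric.ball (0:ℂ) 1) : (1:ℂ) + w ≠ 0 := by
  intro h
  have hn := LD_normSq_lt w hw
  have : w = -1 := by linear_combination h
  rw [this] at hn; simp [Complex.normSq] at hn
lemma LD_one_sub_ne (w : ℂ) (hw : w ∈ Metric.ball (0:ℂ) 1) : (1:ℂ) - w ≠ 0 := by
  intro h
  have hn := LD_normSq_lt w hw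
  have : w = 1 := by linear_combination -h
  rw [this] at hn; simp [Complex.normSq] at hn
lemma LD_mem_slit (w : ℂ) (hw : w ∈ Metric.ball (0:ℂ) 1) : ((1-w)/(1+w)) ∈ slitPlane := by
  have hn := LD_normSq_lt w hw
  rw [Complex.mem_slitPlane_iff]
  left
  rw [Complex.div_re, ← add_div]
  have hpos : (0:ℝ) < Complex.normSq (1 + w) := Complex.normSq_pos.mpr (LD_one_add_ne w hw)
  apply div_pos _ hpos
  rw [Complex.normSq_apply] at hn
  simp only [Complex.sub_re, Complex.add_re, Complex.one_re, Complex.sub_im, Complex.add_im,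
    Complex.one_im]
  nlinarith

lemma LD_h_analytic (μ : ℝ) : AnalyticOnNhd ℂ (h μ) (Metric.ball (0:ℂ) 1) := by
  intro w hw
  have hg : AnalyticAt ℂ (fun w : ℂ => (1 - w) / (1 + w)) w :=
    (analyticAt_const.sub analyticAt_id).div (analyticAt_const.add analyticAt_id)
      (LD_one_add_ne w hw)
  exact (analyticAt_const.mul (hg.clog (LD_mem_slit w hw))).cexp

lemma LD_h_hasDerivAt (μ : ℝ) (w : ℂ) (hw : w ∈ Metric.ball (0:ℂ) 1) :
    HasDerivAt (h μ) ((-2 * μ) / (1 - w^2) * h μ w) w := by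
  have h1 : HasDerivAt (fun w : ℂ => (1 - w) / (1 + w))
      (((-1) * (1 + w) - (1 - w) * 1) / (1 + w)^2) w := by
    exact (((hasDerivAt_id w).const_sub 1).div ((hasDerivAt_id w).const_add 1)
      (LD_one_add_ne w hw))
  have h2 := (h1.clog (LD_mem_slit w hw)).const_mul (μ : ℂ)
  have h3 := h2.cexp
  refine h3.congr_deriv ?_
  rw [show Complex.exp ((μ:ℂ) * Complex.log ((1-w)/(1+w))) = h μ w from rfl]
  have hne1 := LD_one_add_ne w hw
  have hne2 := LD_one_sub_ne w hw
  rw [show (1:ℂ) - w^2 = (1-w)*(1+w) by ring]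
  rw [div_div_div_eq]
  field_simp
  ring

local notation "S" => Metric.ball (0:ℂ) 1

lemma LD_hzero : (0:ℂ) ∈ Metric.ball (0:ℂ) 1 := by simp

lemma LD_itd_eq {f : ℂ → ℂ} (n : ℕ) {x : ℂ} (hx : x ∈ S) :
    iteratedDerivWithin n f S x = iteratedDeriv n f x := by
  simp only [iteratedDerivWithin_eq_iteratedFDerivWithin, iteratedDeriv_eq_iteratedFDeriv,
    iteratedFDerivWithin_of_isOpen n Metric.isOpen_ball hx]

lemma LD_itd_add {G₁ G₂ : ℂ → ℂ} (hG₁ : AnalyticOnNhd ℂ G₁ S) (hG₂ : AnalyticOnNhd ℂ G₂ S)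
    (n : ℕ) : iteratedDeriv n (fun w => G₁ w + G₂ w) 0 =
      iteratedDeriv n G₁ 0 + iteratedDeriv n G₂ 0 := by
  have hu : UniqueDiffOn ℂ S := Metric.isOpen_ball.uniqueDiffOn
  rw [← LD_itd_eq (f := fun w => G₁ w + G₂ w) n LD_hzero, ← LD_itd_eq (f := G₁) n LD_hzero,
    ← LD_itd_eq (f := G₂) n LD_hzero]
  exact iteratedDerivWithin_add LD_hzero hu ((hG₁.contDiffOn hu).contDiffWithinAt LD_hzero)
    ((hG₂.contDiffOn hu).contDiffWithinAt LD_hzero)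

lemma LD_itd_wmul {G : ℂ → ℂ} (hG : AnalyticOnNhd ℂ G S) (k : ℕ) :
    iteratedDeriv (k+1) (fun w => w * G w) 0 = (k+1 : ℂ) * iteratedDeriv k G 0 := by
  induction k generalizing G with
  | zero =>
    rw [iteratedDeriv_one]
    have : HasDerivAt (fun w : ℂ => w * G w) (1 * G 0 + 0 * deriv G 0) 0 :=
      (hasDerivAt_id 0).mul ((hG 0 LD_hzero).differentiableAt.hasDerivAt)
    simp [this.deriv]
  | succ k IH =>
    have hev : deriv (fun w : ℂ => w * G w) =ᶠ[nhds (0:ℂ)]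
        fun w => G w + w * deriv G w := by
      filter_upwards [Metric.isOpen_ball.mem_nhds LD_hzero] with w hw
      have : HasDerivAt (fun w : ℂ => w * G w) (1 * G w + w * deriv G w) w :=
        (hasDerivAt_id w).mul ((hG w hw).differentiableAt.hasDerivAt)
      simpa using this.deriv
    rw [iteratedDeriv_succ', hev.iteratedDeriv_eq (k+1),
      LD_itd_add hG (analyticOnNhd_id.mul hG.deriv) (k+1),
      IH hG.deriv, ← iteratedDeriv_succ']
    push_cast
    ring

lemma LD_itd_w2mul {G : ℂ → ℂ} (hG : AnalyticOnNhd ℂ G S) (k : ℕ) :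
    iteratedDeriv (k+2) (fun w => w^2 * G w) 0
      = ((k+2 : ℂ) * (k+1)) * iteratedDeriv k G 0 := by
  have h1 : AnalyticOnNhd ℂ (fun w : ℂ => w * G w) S := analyticOnNhd_id.mul hG
  have : (fun w : ℂ => w^2 * G w) = (fun w : ℂ => w * (w * G w)) := by
    funext w; ring
  rw [this, LD_itd_wmul h1 (k+1), LD_itd_wmul hG k]
  push_cast
  ring

lemma LD_itd_cmul {G : ℂ → ℂ} (hG : AnalyticOnNhd ℂ G S) (c : ℂ) (n : ℕ) :
    iteratedDeriv n (fun w => c * G w) 0 = c * iteratedDeriv n G 0 := by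
  have hu : UniqueDiffOn ℂ S := Metric.isOpen_ball.uniqueDiffOn
  rw [← LD_itd_eq (f := fun w => c * G w) n LD_hzero, ← LD_itd_eq (f := G) n LD_hzero]
  exact iteratedDerivWithin_const_mul LD_hzero hu c ((hG.contDiffOn hu).contDiffWithinAt LD_hzero)

section rec
variable (lam : ℝ)

lemma LD_Fanalytic : AnalyticOnNhd ℂ (h (-lam)) S := LD_h_analytic (-lam)

lemma LD_Fderiv_analytic : AnalyticOnNhd ℂ (deriv (h (-lam))) S := (LD_Fanalytic lam).deriv

lemma LD_ode_ev : deriv (h (-lam)) =ᶠ[nhds (0:ℂ)]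
    fun w => (2*lam : ℂ) * h (-lam) w + w^2 * deriv (h (-lam)) w := by
  filter_upwards [Metric.isOpen_ball.mem_nhds LD_hzero] with w hw
  have hd := (LD_h_hasDerivAt (-lam) w hw).deriv
  rw [hd]
  have hne1 := LD_one_add_ne w hw
  have hne2 := LD_one_sub_ne w hw
  have hne : (1:ℂ) - w^2 ≠ 0 := by
    rw [show (1:ℂ) - w^2 = (1-w)*(1+w) by ring]
    exact mul_ne_zero hne2 hne1
  field_simp
  push_cast
  ring

lemma LD_key (k : ℕ) : iteratedDeriv (k+3) (h (-lam)) 0 =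
    (2*lam : ℂ) * iteratedDeriv (k+2) (h (-lam)) 0
      + ((k+2 : ℂ)*(k+1)) * iteratedDeriv (k+1) (h (-lam)) 0 := by
  have hsq : AnalyticOnNhd ℂ (fun w : ℂ => w^2 * deriv (h (-lam)) w) S :=
    fun w hw => ((analyticAt_id.pow 2).mul ((LD_Fderiv_analytic lam) w hw))
  rw [iteratedDeriv_succ' (n := k+2), (LD_ode_ev lam).iteratedDeriv_eq (k+2),
    LD_itd_add (analyticOnNhd_const.mul (LD_Fanalytic lam)) hsq (k+2)]
  rw [LD_itd_cmul (LD_Fanalytic lam) _ (k+2), LD_itd_w2mul (LD_Fderiv_analytic lam) k,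
    ← iteratedDeriv_succ']

lemma LD_c0 : iteratedDeriv 0 (h (-lam)) 0 = 1 := by
  simp [h, Complex.log_one]

lemma LD_c1 : iteratedDeriv 1 (h (-lam)) 0 = (2*lam : ℂ) := by
  rw [iteratedDeriv_one, (LD_h_hasDerivAt (-lam) 0 LD_hzero).deriv]
  have := LD_c0 lam
  rw [iteratedDeriv_zero] at this
  rw [this]
  norm_num

lemma LD_c2 : iteratedDeriv 2 (h (-lam)) 0 = (4*lam^2 : ℂ) := by
  have e1 : iteratedDeriv 1 (fun w : ℂ => w^2 * deriv (h (-lam)) w) 0 = 0 := by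
    have : (fun w : ℂ => w^2 * deriv (h (-lam)) w)
        = fun w : ℂ => w * (w * deriv (h (-lam)) w) := by funext w; ring
    rw [this, LD_itd_wmul (analyticOnNhd_id.mul (LD_Fderiv_analytic lam)) 0]
    simp
  have hsq : AnalyticOnNhd ℂ (fun w : ℂ => w^2 * deriv (h (-lam)) w) S :=
    fun w hw => ((analyticAt_id.pow 2).mul ((LD_Fderiv_analytic lam) w hw))
  show iteratedDeriv (1+1) (h (-lam)) 0 = _
  rw [iteratedDeriv_succ' (n := 1),
    (LD_ode_ev lam).iteratedDeriv_eq 1,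
    LD_itd_add (analyticOnNhd_const.mul (LD_Fanalytic lam)) hsq 1,
    LD_itd_cmul (LD_Fanalytic lam) _ 1, e1, LD_c1 lam]
  ring

end rec

lemma LD_cpos (lam : ℝ) (hlam : 0 < lam) :
    ∀ k, ∃ r : ℝ, 0 < r ∧ iteratedDeriv k (h (-lam)) 0 = (r : ℂ) := by
  have H : ∀ k : ℕ, (∃ r : ℝ, 0 < r ∧ iteratedDeriv (k+1) (h (-lam)) 0 = (r : ℂ)) ∧
      (∃ r : ℝ, 0 < r ∧ iteratedDeriv (k+2) (h (-lam)) 0 = (r : ℂ)) := by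
    intro k
    induction k with
    | zero =>
      exact ⟨⟨2*lam, by positivity, by rw [LD_c1]; push_cast; ring⟩,
        ⟨4*lam^2, by positivity, by rw [LD_c2]; push_cast; ring⟩⟩
    | succ k ih =>
      obtain ⟨⟨r, hr, hcr⟩, ⟨s, hs, hcs⟩⟩ := ih
      refine ⟨⟨s, hs, hcs⟩, ⟨2*lam*s + ((k:ℝ)+2)*((k:ℝ)+1)*r, by positivity, ?_⟩⟩
      rw [show k+1+2 = k+3 from rfl, LD_key lam k, hcr, hcs]
      push_cast
      ring
  intro k
  match k with
  | 0 => exact ⟨1, one_pos, by rw [LD_c0]; norm_num⟩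
  | (k+1) => exact (H k).1

/-- For every real `λ > 0`, the function `w ↦ (1+w)/(1-w) · h_{1-λ}(w)` is analytic on
the open unit disk and each of its Taylor coefficients at `w = 0` is a strictly positive
real number: the discrete-time integrator term of the LDPID controller forms a
positive-weighted sum of the samples of its input when `λ > 0`. -/
theorem integrator_coefficients_pos (lam : ℝ) (hlam : 0 < lam) :
    AnalyticOnNhd ℂ (fun w : ℂ => (1 + w) / (1 - w) * h (1 - lam) w) (Metric.ball 0 1) ∧
      ∀ k : ℕ, ∃ r : ℝ, 0 < r ∧
        iteratedDeriv k (fun w : ℂ => (1 + w) / (1 - w) * h (1 - lam) w) 0 /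
          (Nat.factorial k : ℂ) = (r : ℂ) := by
  have hev : (fun w : ℂ => (1 + w) / (1 - w) * h (1 - lam) w) =ᶠ[nhds (0:ℂ)]
      h (-lam) := by
    filter_upwards [Metric.isOpen_ball.mem_nhds LD_hzero] with w hw
    have hne1 := LD_one_add_ne w hw
    have hne2 := LD_one_sub_ne w hw
    have hgne : (1-w)/(1+w) ≠ 0 := div_ne_zero hne2 hne1
    simp only [h]
    push_cast
    rw [show ((1:ℂ) - lam) * Complex.log ((1-w)/(1+w))
        = Complex.log ((1-w)/(1+w)) + (-lam) * Complex.log ((1-w)/(1+w)) by ring,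
      Complex.exp_add, Complex.exp_log hgne]
    field_simp
  constructor
  · intro w hw
    exact ((analyticAt_const.add analyticAt_id).div
      (analyticAt_const.sub analyticAt_id) (LD_one_sub_ne w hw)).mul (LD_h_analytic (1-lam) w hw)
  · intro k
    obtain ⟨r, hr, hc⟩ := LD_cpos lam hlam k
    refine ⟨r / (Nat.factorial k : ℝ), by positivity, ?_⟩
    rw [hev.iteratedDeriv_eq k, hc]
    push_cast
    ring
end

section
/- Let $n \geq 1$ be an integer, let $t \in \mathbb{R}$, and let $e : \mathbb{R} \to \mathbb{R}$ be $(n+1)$ times continuously differentiable on a neighborhood of $t$. Then the $n$-th order backward difference approximates the derivative with error of order $n$: $\frac{1}{T} \sum_{k=0}^{n} g(n,k)\, e(t - kT) - e'(t) = O(T^n)$ as $T \to 0^+$. -/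
open Finset
open scoped Nat

/-- The `n`-th order backward difference weights `g n k`, `0 ≤ k ≤ n`, defined by
`g n 0 = ∑_{j=1}^{n} 1/j`, `g n 1 = -n`, and
`g n k = -g n (k-1) · (k-1)(n-k+1)/k²` for `2 ≤ k ≤ n`. -/
noncomputable def g (n : ℕ) : ℕ → ℝ
  | 0 => ∑ j ∈ Finset.range n, (1 : ℝ) / (j + 1)
  | 1 => -(n : ℝ)
  | (k + 2) =>
      -g n (k + 1) * (((k : ℝ) + 2) - 1) * ((n : ℝ) - ((k : ℝ) + 2) + 1) / ((k : ℝ) + 2) ^ 2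

lemma altA (n : ℕ) : ∀ j < n, ∑ k ∈ Finset.range (n+1), (-1:ℝ)^k * (n.choose k) * (k:ℝ)^j = 0 := by
  induction n with
  | zero => intro j hj; omega
  | succ n ih =>
    intro j hj
    have hext : ∀ j' : ℕ, ∑ k ∈ Finset.range (n+1), (-1:ℝ)^k * (n.choose (k+1)) * ((k:ℝ)+1)^j'
        = (0:ℝ)^j' - ∑ k ∈ Finset.range (n+1), (-1:ℝ)^k * (n.choose k) * (k:ℝ)^j' := by
      intro j'
      have h1 : ∑ k ∈ Finset.range (n+2), (-1:ℝ)^k * (n.choose k) * (k:ℝ)^j'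
          = ∑ k ∈ Finset.range (n+1), (-1:ℝ)^k * (n.choose k) * (k:ℝ)^j' := by
        rw [Finset.sum_range_succ]
        simp [Nat.choose_succ_self]
      rw [Finset.sum_range_succ' _ (n+1)] at h1
      push_cast at h1
      simp only [pow_succ, pow_zero, one_mul, Nat.choose_zero_right, Nat.cast_one] at h1
      have h2 : ∑ x ∈ Finset.range (n+1), (-1:ℝ)^x * -1 * (n.choose (x+1)) * ((x:ℝ)+1)^j'
          = -∑ x ∈ Finset.range (n+1), (-1:ℝ)^x * (n.choose (x+1)) * ((x:ℝ)+1)^j' := by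
        rw [← Finset.sum_neg_distrib]
        exact Finset.sum_congr rfl (fun x _ => by ring)
      rw [h2] at h1
      linarith
    -- expand the Pascal identity
    have pascal : ∀ k : ℕ, (((n+1).choose (k+1) : ℝ)) = (n.choose k : ℝ) + (n.choose (k+1) : ℝ) := by
      intro k; rw [Nat.choose_succ_succ]; push_cast; ring
    rw [Finset.sum_range_succ' _ (n+1)]
    push_cast
    have hsplit : ∑ k ∈ Finset.range (n+1), (-1:ℝ)^(k+1) * ((n+1).choose (k+1)) * ((k:ℝ)+1)^j
        = -(∑ k ∈ Finset.range (n+1), (-1:ℝ)^k * (n.choose k) * ((k:ℝ)+1)^j)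
          - ∑ k ∈ Finset.range (n+1), (-1:ℝ)^k * (n.choose (k+1)) * ((k:ℝ)+1)^j := by
      rw [← Finset.sum_neg_distrib, ← Finset.sum_sub_distrib]
      refine Finset.sum_congr rfl (fun k _ => ?_)
      rw [pascal k]; ring
    -- binomial expansion of (k+1)^j
    have hbin : ∑ k ∈ Finset.range (n+1), (-1:ℝ)^k * (n.choose k) * ((k:ℝ)+1)^j
        = ∑ i ∈ Finset.range (j+1), (j.choose i : ℝ) *
            (∑ k ∈ Finset.range (n+1), (-1:ℝ)^k * (n.choose k) * (k:ℝ)^i) := by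
      rw [show ∑ k ∈ Finset.range (n+1), (-1:ℝ)^k * (n.choose k) * ((k:ℝ)+1)^j
          = ∑ k ∈ Finset.range (n+1), ∑ i ∈ Finset.range (j+1),
              (j.choose i : ℝ) * ((-1:ℝ)^k * (n.choose k) * (k:ℝ)^i) from
        Finset.sum_congr rfl (fun k _ => by
          rw [add_pow, Finset.mul_sum]
          refine Finset.sum_congr rfl (fun i _ => ?_)
          simp only [one_pow]; ring)]
      rw [Finset.sum_comm]
      exact Finset.sum_congr rfl (fun i _ => by rw [Finset.mul_sum])
    have hAj : ∑ k ∈ Finset.range (n+1), (-1:ℝ)^k * (n.choose k) * ((k:ℝ)+1)^j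
        = ∑ k ∈ Finset.range (n+1), (-1:ℝ)^k * (n.choose k) * (k:ℝ)^j := by
      rw [hbin, Finset.sum_range_succ]
      have hz : ∀ i ∈ Finset.range j, (j.choose i : ℝ) *
          (∑ k ∈ Finset.range (n+1), (-1:ℝ)^k * (n.choose k) * (k:ℝ)^i) = 0 := by
        intro i hi
        have hij := Finset.mem_range.mp hi
        rw [ih i (by omega)]  -- i < j ≤ n
        ring
      rw [Finset.sum_congr rfl hz, Finset.sum_const_zero]
      simp
    rw [hsplit, hAj, hext j]
    simp only [Nat.choose_zero_right, Nat.cast_one, pow_zero, one_mul, mul_one]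
    ring

lemma altChooseZero (n : ℕ) (hn : 1 ≤ n) :
    ∑ k ∈ Finset.range n, (-1:ℝ)^(k+1) * (n.choose (k+1)) = -1 := by
  have h := altA n 0 hn
  rw [Finset.sum_range_succ' _ n] at h
  simp only [pow_zero, mul_one, Nat.choose_zero_right, Nat.cast_one, one_mul] at h
  have : ∑ k ∈ Finset.range n, (-1:ℝ)^(k+1) * (n.choose (k+1))
      = ∑ x ∈ Finset.range n, (-1:ℝ)^(x+1) * ↑(n.choose (x+1)) * 1 := by
    refine Finset.sum_congr rfl (fun k _ => by ring)
  rw [this]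
  linarith [h]

lemma altHarm (n : ℕ) :
    ∑ k ∈ Finset.range n, (-1:ℝ)^(k+1) * (n.choose (k+1)) / (k+1)
      = -∑ j ∈ Finset.range n, (1:ℝ)/(j+1) := by
  induction n with
  | zero => simp
  | succ n ih =>
    have pascal : ∀ k : ℕ, (((n+1).choose (k+1) : ℝ)) = (n.choose k : ℝ) + (n.choose (k+1) : ℝ) := by
      intro k; rw [Nat.choose_succ_succ]; push_cast; ring
    have hsplit : ∑ k ∈ Finset.range (n+1), (-1:ℝ)^(k+1) * ((n+1).choose (k+1)) / (k+1)
        = (∑ k ∈ Finset.range (n+1), (-1:ℝ)^(k+1) * (n.choose (k+1)) / (k+1))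
          + ∑ k ∈ Finset.range (n+1), (-1:ℝ)^(k+1) * (n.choose k) / (k+1) := by
      rw [← Finset.sum_add_distrib]
      refine Finset.sum_congr rfl (fun k _ => ?_)
      rw [pascal k]; ring
    have hfirst : ∑ k ∈ Finset.range (n+1), (-1:ℝ)^(k+1) * (n.choose (k+1)) / (k+1)
        = ∑ k ∈ Finset.range n, (-1:ℝ)^(k+1) * (n.choose (k+1)) / (k+1) := by
      rw [Finset.sum_range_succ]
      simp [Nat.choose_succ_self]
    have hkey : ∀ k : ℕ, ((n:ℝ)+1) * (n.choose k) = ((n+1).choose (k+1) : ℝ) * ((k:ℝ)+1) := by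
      intro k
      have := Nat.add_one_mul_choose_eq n k
      have := congrArg (fun m : ℕ => (m : ℝ)) this
      push_cast at this
      linarith
    have hsecond : ∑ k ∈ Finset.range (n+1), (-1:ℝ)^(k+1) * (n.choose k) / (k+1)
        = -1 / ((n:ℝ)+1) := by
      have h1 : ∀ k ∈ Finset.range (n+1), (-1:ℝ)^(k+1) * (n.choose k) / (k+1)
          = ((-1:ℝ)^(k+1) * ((n+1).choose (k+1))) / ((n:ℝ)+1) := by
        intro k _
        have hk : ((k:ℝ)+1) ≠ 0 := by positivity
        have hn1 : ((n:ℝ)+1) ≠ 0 := by positivity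
        field_simp
        linear_combination hkey k
      rw [Finset.sum_congr rfl h1, ← Finset.sum_div, altChooseZero (n+1) (by omega)]
    rw [hsplit, hfirst, ih, hsecond, Finset.sum_range_succ]
    push_cast
    ring

lemma g_succ_eq (n : ℕ) : ∀ k : ℕ, k + 1 ≤ n →
    g n (k+1) = (-1:ℝ)^(k+1) * (n.choose (k+1)) / ((k:ℝ)+1) := by
  intro k
  induction k with
  | zero =>
    intro _
    simp [g, Nat.choose_one_right]
  | succ k ihk =>
    intro hk
    have hk' : k + 1 ≤ n := by omega
    have hrec : g n (k+2) = -g n (k + 1) * (((k : ℝ) + 2) - 1) * ((n : ℝ) - ((k : ℝ) + 2) + 1)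
        / ((k : ℝ) + 2) ^ 2 := rfl
    have hcast : ((n.choose (k+2) : ℝ)) * ((k:ℝ)+2) = (n.choose (k+1) : ℝ) * ((n:ℝ) - ((k:ℝ)+1)) := by
      have h := Nat.choose_succ_right_eq n (k+1)
      have h2 := congrArg (fun m : ℕ => (m : ℝ)) h
      push_cast at h2
      rw [Nat.cast_sub hk'] at h2
      push_cast at h2
      linarith
    have h1 : ((k:ℝ)+1) ≠ 0 := by positivity
    have h2 : ((k:ℝ)+2) ≠ 0 := by positivity
    have main : (n.choose (k+1) : ℝ)/((k:ℝ)+1) * (((k:ℝ)+2)-1) * ((n:ℝ)-((k:ℝ)+2)+1)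
        / ((k:ℝ)+2)^2 = (n.choose (k+2):ℝ)/((k:ℝ)+2) := by
      field_simp
      linear_combination (-((k:ℝ)+1)) * hcast
    rw [hrec, ihk hk']
    calc -((-1:ℝ)^(k+1) * (n.choose (k+1):ℝ) / ((k:ℝ)+1)) * (((k:ℝ)+2)-1)
          * ((n:ℝ)-((k:ℝ)+2)+1) / ((k:ℝ)+2)^2
        = (-1:ℝ)^(k+1+1) * ((n.choose (k+1):ℝ)/((k:ℝ)+1) * (((k:ℝ)+2)-1)
            * ((n:ℝ)-((k:ℝ)+2)+1) / ((k:ℝ)+2)^2) := by ring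
      _ = (-1:ℝ)^(k+1+1) * ((n.choose (k+2):ℝ)/((k:ℝ)+2)) := by rw [main]
      _ = (-1:ℝ)^(k+1+1) * (n.choose (k+1+1):ℝ) / (((k+1:ℕ):ℝ)+1) := by
          push_cast; ring

lemma g_moments (n : ℕ) (hn : 1 ≤ n) (m : ℕ) (hm : m ≤ n) :
    ∑ k ∈ Finset.range (n+1), g n k * (k:ℝ)^m = if m = 1 then -1 else 0 := by
  rw [Finset.sum_range_succ' _ n]
  have hg0 : g n 0 = ∑ j ∈ Finset.range n, (1:ℝ)/(j+1) := rfl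
  cases m with
  | zero =>
    have h0 : ∀ k ∈ Finset.range n, g n (k+1) * (((k+1 : ℕ)):ℝ)^0
        = (-1:ℝ)^(k+1) * (n.choose (k+1)) / ((k:ℝ)+1) := by
      intro k hk
      have hkn := Finset.mem_range.mp hk
      rw [g_succ_eq n k (by omega)]
      simp
    rw [Finset.sum_congr rfl h0, altHarm n, hg0]
    simp
  | succ m' =>
    have hterm : ∀ k ∈ Finset.range n, g n (k+1) * (((k+1 : ℕ)):ℝ)^(m'+1)
        = (-1:ℝ)^(k+1) * (n.choose (k+1)) * ((k:ℝ)+1)^m' := by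
      intro k hk
      have hkn := Finset.mem_range.mp hk
      rw [g_succ_eq n k (by omega)]
      have h1 : ((k:ℝ)+1) ≠ 0 := by positivity
      push_cast
      field_simp
      ring
    rw [Finset.sum_congr rfl hterm]
    have hA := altA n m' (by omega)
    rw [Finset.sum_range_succ' _ n] at hA
    push_cast at hA
    simp only [pow_zero, one_mul, Nat.choose_zero_right, Nat.cast_one] at hA
    have hz : g n 0 * (((0:ℕ)):ℝ)^(m'+1) = 0 := by
      simp
    rw [hz]
    rcases Nat.eq_zero_or_pos m' with rfl | hm'
    · norm_num at hA ⊢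
      linarith
    · rw [zero_pow (by omega : m' ≠ 0)] at hA
      rw [if_neg (by omega : ¬ m' + 1 = 1)]
      linarith

/-- If `e` is `(n+1)` times continuously differentiable on a neighborhood of `t`, the
`n`-th order backward difference approximates the derivative with error `O(Tⁿ)` as
`T → 0⁺`. -/
theorem backward_difference_order_n (n : ℕ) (hn : 1 ≤ n) (t : ℝ) (e : ℝ → ℝ)
    (he : ∃ s ∈ nhds t, ContDiffOn ℝ (n + 1) e s) :
    ∃ C > (0 : ℝ), ∃ δ > (0 : ℝ), ∀ T : ℝ, 0 < T → T < δ →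
      |(1 / T) * ∑ k ∈ Finset.range (n + 1), g n k * e (t - k * T) - deriv e t|
        ≤ C * T ^ n := by
  obtain ⟨s, hs, hcd⟩ := he
  obtain ⟨r, hr, hball⟩ : ∃ r > 0, Set.Icc (t - r) (t + r) ⊆ s := by
    rcases Metric.mem_nhds_iff.mp hs with ⟨ε, hε, hb⟩
    refine ⟨ε/2, by positivity, fun x hx => hb ?_⟩
    rw [Metric.mem_ball, Real.dist_eq]
    obtain ⟨h1, h2⟩ := hx
    have : |x - t| ≤ ε/2 := abs_sub_le_iff.mpr ⟨by linarith, by linarith⟩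
    linarith
  have htr : t ≤ t + r := by linarith
  set I : Set ℝ := Set.Icc t (t + r) with hI
  have hF : ∀ x : ℝ, e (2*t - x) = (fun y => e (2*t - y)) x := fun _ => rfl
  set F : ℝ → ℝ := fun y => e (2*t - y) with hFdef
  have hmaps : Set.MapsTo (fun x => 2*t - x) I (Set.Icc (t - r) (t + r)) := by
    intro x hx
    obtain ⟨h1, h2⟩ := hx
    simp only [Set.mem_Icc]
    constructor <;> [linarith; linarith]
  have hFcd : ContDiffOn ℝ (n+1) F I :=
    (hcd.mono hball).comp ((contDiff_const.sub contDiff_id).contDiffOn) hmaps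
  have hIuniq : UniqueDiffOn ℝ I := uniqueDiffOn_Icc (by linarith)
  have htI : t ∈ I := ⟨le_refl t, htr⟩
  obtain ⟨C, hC⟩ := (isCompact_Icc : IsCompact I).exists_bound_of_continuousOn
      (hFcd.continuousOn_iteratedDerivWithin (le_refl _) hIuniq)
  have hC0 : 0 ≤ C := le_trans (norm_nonneg _) (hC t htI)
  set d : ℕ → ℝ := fun m => iteratedDerivWithin m F I t with hd
  have hd1 : d 1 = -deriv e t := by
    have hce : ContDiffAt ℝ (n+1) e t := hcd.contDiffAt hs
    have hdiffe : DifferentiableAt ℝ e t := hce.differentiableAt (by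
      simp)
    have h2t : 2*t - t = t := by ring
    have hdiffa : DifferentiableAt ℝ (fun x : ℝ => 2*t - x) t :=
      (differentiable_const _).differentiableAt.sub differentiable_id.differentiableAt
    have hdiffF : DifferentiableAt ℝ F t := by
      have := DifferentiableAt.comp t (by rw [h2t] at *; exact hdiffe) hdiffa
      exact this
    have h1 : d 1 = derivWithin F I t := congrFun iteratedDerivWithin_one t
    rw [h1, hdiffF.derivWithin (hIuniq t htI)]
    have := deriv_comp_const_sub e (2*t) t
    rw [h2t] at this
    exact this
  have hn' : (0:ℝ) < n := by exact_mod_cast hn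
  have hfac : (0:ℝ) < (n ! : ℝ) := by exact_mod_cast Nat.factorial_pos n
  set G : ℝ := ∑ k ∈ Finset.range (n+1), |g n k| * ((k:ℝ))^(n+1) with hG
  have hG0 : 0 ≤ G := Finset.sum_nonneg fun k _ => mul_nonneg (abs_nonneg _) (by positivity)
  have hCG : 0 ≤ C * G / (n ! : ℝ) := div_nonneg (mul_nonneg hC0 hG0) hfac.le
  refine ⟨C * G / (n ! : ℝ) + 1, by linarith, r / n, by positivity, ?_⟩
  intro T hT hTδ
  have hxk : ∀ k, k ∈ Finset.range (n+1) → t + (k:ℝ)*T ∈ I := by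
    intro k hk
    have hkn : k ≤ n := Nat.lt_succ_iff.mp (Finset.mem_range.mp hk)
    have hkn' : (k:ℝ) ≤ n := by exact_mod_cast hkn
    have h1 : 0 ≤ (k:ℝ)*T := mul_nonneg (Nat.cast_nonneg k) hT.le
    have h2 : (k:ℝ)*T ≤ r := by
      have : (k:ℝ)*T ≤ (n:ℝ)*T := mul_le_mul_of_nonneg_right hkn' hT.le
      have h3 : (n:ℝ)*T < (n:ℝ)*(r/n) := mul_lt_mul_of_pos_left hTδ hn'
      have h4 : (n:ℝ)*(r/n) = r := by field_simp
      linarith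
    exact ⟨by linarith, by linarith⟩
  -- Taylor remainder bound for each k
  have htay : ∀ k ∈ Finset.range (n+1),
      |e (t - (k:ℝ)*T) - taylorWithinEval F n I t (t + (k:ℝ)*T)|
        ≤ C * ((k:ℝ)*T)^(n+1) / (n ! : ℝ) := by
    intro k hk
    have hb := taylor_mean_remainder_bound htr hFcd (hxk k hk) (fun y hy => hC y hy)
    have he1 : F (t + (k:ℝ)*T) = e (t - (k:ℝ)*T) := by
      show e (2*t - (t + (k:ℝ)*T)) = e (t - (k:ℝ)*T)
      norm_num; ring_nf
    have he2 : t + (k:ℝ)*T - t = (k:ℝ)*T := by ring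
    rw [he1, he2] at hb
    exact hb
  -- the Taylor polynomials sum to T * deriv e t
  have hpoly : ∑ k ∈ Finset.range (n+1), g n k * taylorWithinEval F n I t (t + (k:ℝ)*T)
      = T * deriv e t := by
    have hexp : ∀ k : ℕ, taylorWithinEval F n I t (t + (k:ℝ)*T)
        = ∑ m ∈ Finset.range (n+1), ((m ! : ℝ)⁻¹ * ((k:ℝ)*T)^m) * d m := by
      intro k
      rw [taylor_within_apply]
      refine Finset.sum_congr rfl fun m _ => ?_
      rw [smul_eq_mul, show t + (k:ℝ)*T - t = (k:ℝ)*T by ring]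
    calc ∑ k ∈ Finset.range (n+1), g n k * taylorWithinEval F n I t (t + (k:ℝ)*T)
        = ∑ k ∈ Finset.range (n+1), ∑ m ∈ Finset.range (n+1),
            ((m ! : ℝ)⁻¹ * T^m * d m) * (g n k * (k:ℝ)^m) := by
          refine Finset.sum_congr rfl fun k _ => ?_
          rw [hexp k, Finset.mul_sum]
          exact Finset.sum_congr rfl fun m _ => by rw [mul_pow]; ring
      _ = ∑ m ∈ Finset.range (n+1), ((m ! : ℝ)⁻¹ * T^m * d m)
            * (∑ k ∈ Finset.range (n+1), g n k * (k:ℝ)^m) := by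
          rw [Finset.sum_comm]
          exact Finset.sum_congr rfl fun m _ => by rw [Finset.mul_sum]
      _ = ∑ m ∈ Finset.range (n+1), ((m ! : ℝ)⁻¹ * T^m * d m)
            * (if m = 1 then (-1:ℝ) else 0) := by
          refine Finset.sum_congr rfl fun m hm => ?_
          rw [g_moments n hn m (Nat.lt_succ_iff.mp (Finset.mem_range.mp hm))]
      _ = ((1 ! : ℝ)⁻¹ * T^1 * d 1) * (-1:ℝ) := by
          rw [Finset.sum_eq_single_of_mem 1 (Finset.mem_range.mpr (by omega))]
          · rw [if_pos rfl]
          · intro b _ hb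
            rw [if_neg hb, mul_zero]
      _ = T * deriv e t := by
          rw [hd1]
          norm_num [Nat.factorial_one]
  -- assemble
  have hsum : |(∑ k ∈ Finset.range (n+1), g n k * e (t - (k:ℝ)*T)) - T * deriv e t|
      ≤ C * G / (n ! : ℝ) * T^(n+1) := by
    rw [← hpoly, ← Finset.sum_sub_distrib]
    refine le_trans (Finset.abs_sum_le_sum_abs _ _) ?_
    have hstep : ∀ k ∈ Finset.range (n+1),
        |g n k * e (t - (k:ℝ)*T) - g n k * taylorWithinEval F n I t (t + (k:ℝ)*T)|
          ≤ (C / (n ! : ℝ) * T^(n+1)) * (|g n k| * (k:ℝ)^(n+1)) := by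
      intro k hk
      rw [← mul_sub, abs_mul]
      have := mul_le_mul_of_nonneg_left (htay k hk) (abs_nonneg (g n k))
      refine le_trans this (le_of_eq ?_)
      rw [mul_pow]
      ring
    refine le_trans (Finset.sum_le_sum hstep) (le_of_eq ?_)
    rw [← Finset.mul_sum, ← hG]
    ring
  have hT0 : T ≠ 0 := ne_of_gt hT
  have hfinal : (1 / T) * (∑ k ∈ Finset.range (n+1), g n k * e (t - (k:ℝ)*T)) - deriv e t
      = (1 / T) * ((∑ k ∈ Finset.range (n+1), g n k * e (t - (k:ℝ)*T)) - T * deriv e t) := by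
    field_simp
  rw [hfinal, abs_mul, abs_of_pos (by positivity : (0:ℝ) < 1/T)]
  have := mul_le_mul_of_nonneg_left hsum (le_of_lt (by positivity : (0:ℝ) < 1/T))
  refine le_trans this ?_
  have heq : 1/T * (C * G / (n ! : ℝ) * T^(n+1)) = C * G / (n ! : ℝ) * T^n := by
    rw [pow_succ]
    field_simp
  rw [heq]
  exact mul_le_mul_of_nonneg_right (by linarith) (by positivity)
end
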